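/- Let q be a prime power, d a divisor of q-1, u a positive integer, and h a polynomial over F_q. Then f(x) = x^u · h(x^((q-1)/d)) permutes F_q if and only if both: (1) gcd(u, (q-1)/d) = 1, and (2) the map x ↦ x^u · h(x)^((q-1)/d) permutes the set μ_d of d-th roots of unity in F_q^*. -/

import Mathlib

lemma aux_root (F : Type*) [Field F] [Fintype F] {d s : ℕ}
    (hds : d * s = Fintype.card F - 1) (hd0 : 0 < d) {x : F} (hx : x ^ d = 1) :
    ∃ a : F, a ≠ 0 ∧ a ^ s = x := by
  classical
  have hx0 : x ≠ 0 := by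
    intro h; rw [h, zero_pow hd0.ne'] at hx; exact zero_ne_one hx
  obtain ⟨g, hg⟩ := IsCyclic.exists_generator (α := Fˣ)
  have hord : orderOf g = Fintype.card F - 1 := by
    rw [orderOf_eq_card_of_forall_mem_zpowers hg, Nat.card_eq_fintype_card, Fintype.card_units]
  obtain ⟨k, hk⟩ := hg (Units.mk0 x hx0)
  have hk : g ^ k = Units.mk0 x hx0 := hk
  have hxd : (Units.mk0 x hx0) ^ d = 1 := by
    ext; simp [hx]
  have h1 : g ^ (k * (d : ℤ)) = 1 := by
    rw [zpow_mul, hk, zpow_natCast, hxd]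
  have hdvd : ((Fintype.card F - 1 : ℕ) : ℤ) ∣ k * d := by
    rw [← hord]; exact_mod_cast orderOf_dvd_iff_zpow_eq_one.mpr h1
  rw [← hds] at hdvd
  obtain ⟨t, ht⟩ := hdvd
  have hk' : k = (s : ℤ) * t := by
    have hd' : (d : ℤ) ≠ 0 := by exact_mod_cast hd0.ne'
    have : (d : ℤ) * k = (d : ℤ) * ((s : ℤ) * t) := by push_cast at ht; ring_nf; ring_nf at ht; linarith
    exact mul_left_cancel₀ hd' this
  refine ⟨((g ^ t : Fˣ) : F), Units.ne_zero _, ?_⟩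
  have h2 : ((g ^ t) ^ (s : ℕ) : Fˣ) = Units.mk0 x hx0 := by
    rw [← zpow_natCast, ← zpow_mul, mul_comm, ← hk', hk]
  calc ((g ^ t : Fˣ) : F) ^ s = (((g ^ t) ^ (s:ℕ) : Fˣ) : F) := by push_cast; ring
    _ = x := by rw [h2]; rfl


lemma aux_divmul {e n s : ℕ} (he : 0 < e) (hen : e ∣ n) (hes : e ∣ s) :
    n / e * s = n * (s / e) := by
  obtain ⟨s', rfl⟩ := hes
  obtain ⟨n', rfl⟩ := hen
  rw [Nat.mul_div_cancel_left _ he, Nat.mul_div_cancel_left _ he]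
  ring

-- Aux 2: nontrivial kernel element when gcd > 1
lemma aux_ker (F : Type*) [Field F] [Fintype F] {s u : ℕ}
    (hs : s ∣ Fintype.card F - 1) (he : 1 < Nat.gcd u s) :
    ∃ ζ : F, ζ ≠ 1 ∧ ζ ^ s = 1 ∧ ζ ^ u = 1 := by
  classical
  set e := Nat.gcd u s with hedef
  set n := Fintype.card F - 1 with hn
  have hn0 : 0 < n := by
    have := Fintype.one_lt_card (α := F)
    omega
  have hes : e ∣ s := Nat.gcd_dvd_right u s
  have heu : e ∣ u := Nat.gcd_dvd_left u s
  have hen : e ∣ n := hes.trans hs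
  obtain ⟨g, hg⟩ := IsCyclic.exists_generator (α := Fˣ)
  have hord : orderOf g = n := by
    rw [orderOf_eq_card_of_forall_mem_zpowers hg, Nat.card_eq_fintype_card, Fintype.card_units]
  have hg1 : (g : Fˣ) ^ n = 1 := by rw [← hord]; exact pow_orderOf_eq_one g
  refine ⟨((g ^ (n / e) : Fˣ) : F), ?_, ?_, ?_⟩
  · intro hone
    have : (g ^ (n / e) : Fˣ) = 1 := Units.ext (by simpa using hone)
    have hdvd : orderOf g ∣ n / e := orderOf_dvd_of_pow_eq_one this
    rw [hord] at hdvd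
    have h1 : 0 < n / e := Nat.div_pos (Nat.le_of_dvd hn0 hen) (by omega)
    have h2 : n / e < n := Nat.div_lt_self hn0 he
    have := Nat.le_of_dvd h1 hdvd
    omega
  · have h3 : ((g ^ (n / e) : Fˣ) : F) ^ s = ((g ^ (n / e * s) : Fˣ) : F) := by
      push_cast; rw [← pow_mul]
    rw [h3, aux_divmul (by omega) hen hes, pow_mul, hg1]; simp
  · have h3 : ((g ^ (n / e) : Fˣ) : F) ^ u = ((g ^ (n / e * u) : Fˣ) : F) := by
      push_cast; rw [← pow_mul]
    rw [h3, aux_divmul (by omega) hen heu, pow_mul, hg1]; simp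

-- Aux 3: u-th root in μ_s
lemma aux_uroot (F : Type*) [Field F] {s u : ℕ} (hgcd : Nat.gcd u s = 1)
    {ζ : F} (hζ0 : ζ ≠ 0) (hζ : ζ ^ s = 1) :
    ∃ ε : F, ε ^ s = 1 ∧ ε ^ u = ζ := by
  set zu := Units.mk0 ζ hζ0 with hzu
  have hzs : zu ^ s = 1 := Units.ext (by simpa [hzu] using hζ)
  have hbez : (1 : ℤ) = u * Nat.gcdA u s + s * Nat.gcdB u s := by
    have := Nat.gcd_eq_gcd_ab u s
    rw [hgcd] at this; exact_mod_cast this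
  set A := Nat.gcdA u s with hA
  set B := Nat.gcdB u s with hB
  have hsB : zu ^ ((s : ℤ) * B) = 1 := by
    rw [zpow_mul, zpow_natCast, hzs, one_zpow]
  refine ⟨((zu ^ A : Fˣ) : F), ?_, ?_⟩
  · have h4 : (zu ^ A) ^ (s : ℕ) = 1 := by
      rw [← zpow_natCast, ← zpow_mul, mul_comm, zpow_mul, zpow_natCast, hzs, one_zpow]
    calc ((zu ^ A : Fˣ) : F) ^ s = (((zu ^ A) ^ (s:ℕ) : Fˣ) : F) := by push_cast; ring
      _ = 1 := by rw [h4]; rfl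
  · have hexp : A * (u : ℤ) = 1 - (s : ℤ) * B := by linarith [hbez]
    have key : (zu ^ A) ^ (u : ℕ) = zu := by
      rw [← zpow_natCast, ← zpow_mul, hexp, zpow_sub, hsB]; simp
    calc ((zu ^ A : Fˣ) : F) ^ u = (((zu ^ A) ^ (u:ℕ) : Fˣ) : F) := by push_cast; ring
      _ = ζ := by rw [key]; rfl

-- Aux 4
lemma aux_eq (F : Type*) [Field F] {s u : ℕ} (hgcd : Nat.gcd u s = 1)
    {a b : F} (_ha : a ≠ 0) (hb : b ≠ 0) (h1 : a ^ u = b ^ u) (h2 : a ^ s = b ^ s) :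
    a = b := by
  have hxu : (a / b) ^ u = 1 := by rw [div_pow, h1, div_self (pow_ne_zero _ hb)]
  have hxs : (a / b) ^ s = 1 := by rw [div_pow, h2, div_self (pow_ne_zero _ hb)]
  have hx1 : a / b = 1 := by
    have hu' : orderOf (a / b) ∣ u := orderOf_dvd_of_pow_eq_one hxu
    have hs' : orderOf (a / b) ∣ s := orderOf_dvd_of_pow_eq_one hxs
    exact orderOf_eq_one_iff.mp (Nat.dvd_one.mp (hgcd ▸ Nat.dvd_gcd hu' hs'))
  field_simp at hx1
  exact hx1



/-- Lemma 2 (cyclotomy lemma): `f(x) = x^u h(x^((q-1)/d))` permutes `F_q` iff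
`gcd(u,(q-1)/d) = 1` and `x ↦ x^u h(x)^((q-1)/d)` permutes the `d`-th roots of unity. -/
theorem stmt_0 (F : Type*) [Field F] [Fintype F] (d u : ℕ)
    (hd : d ∣ Fintype.card F - 1) (hu : 0 < u) (h : Polynomial F) :
    Function.Bijective
        (fun a : F => a ^ u * h.eval (a ^ ((Fintype.card F - 1) / d))) ↔
      (Nat.gcd u ((Fintype.card F - 1) / d) = 1 ∧
        Set.BijOn (fun x : F => x ^ u * (h.eval x) ^ ((Fintype.card F - 1) / d))
          {x : F | x ^ d = 1} {x : F | x ^ d = 1}) := by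
  classical
  set n := Fintype.card F - 1 with hn
  set s := n / d with hsdef
  have hn0 : 0 < n := by
    have := Fintype.one_lt_card (α := F); omega
  have hd0 : 0 < d := Nat.pos_of_dvd_of_pos hd hn0
  have hds : d * s = n := Nat.mul_div_cancel' hd
  have hs0 : 0 < s := by
    rcases Nat.eq_zero_or_pos s with hs | hs
    · rw [hs, mul_zero] at hds; omega
    · exact hs
  have hsn : s ∣ n := ⟨d, by rw [← hds]; ring⟩
  set f : F → F := fun a => a ^ u * h.eval (a ^ s) with hf
  set g : F → F := fun x => x ^ u * (h.eval x) ^ s with hgdef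
  have hpow : ∀ a : F, (f a) ^ s = g (a ^ s) := by
    intro a
    simp only [hf, hgdef, mul_pow, pow_right_comm]
  have hmem : ∀ a : F, a ≠ 0 → (a ^ s) ^ d = 1 := by
    intro a ha
    rw [← pow_mul, mul_comm s d, hds, hn]
    exact FiniteField.pow_card_sub_one_eq_one a ha
  have hpown : ∀ c : F, c ≠ 0 → (c ^ s) ^ d = 1 := hmem
  have hf0 : f 0 = 0 := by simp [hf, zero_pow hu.ne']
  constructor
  · intro hbf
    have hne : ∀ a : F, a ≠ 0 → f a ≠ 0 := by
      intro a ha hfa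
      exact ha (hbf.injective (by rw [hfa, hf0]))
    have hgcd : Nat.gcd u s = 1 := by
      by_contra hg1
      have hgpos : 0 < Nat.gcd u s := Nat.gcd_pos_of_pos_left _ hu
      obtain ⟨ζ, hζ1, hζs, hζu⟩ := aux_ker F (u := u) hsn (by omega)
      apply hζ1
      apply hbf.injective
      show f ζ = f 1
      simp [hf, hζs, hζu]
    refine ⟨hgcd, ?_⟩
    have hmapsTo : Set.MapsTo g {x : F | x ^ d = 1} {x : F | x ^ d = 1} := by
      intro x hx
      obtain ⟨a, ha0, has⟩ := aux_root F hds hd0 hx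
      show g x ^ d = 1
      rw [← has, ← hpow]
      exact hpown (f a) (hne a ha0)
    have hinjOn : Set.InjOn g {x : F | x ^ d = 1} := by
      intro x1 hx1 x2 hx2 heq
      obtain ⟨a, ha0, has⟩ := aux_root F hds hd0 hx1
      obtain ⟨b, hb0, hbs⟩ := aux_root F hds hd0 hx2
      have hfab : (f a) ^ s = (f b) ^ s := by rw [hpow, hpow, has, hbs]; exact heq
      have hfb0 : f b ≠ 0 := hne b hb0
      have hζ0 : f a / f b ≠ 0 := div_ne_zero (hne a ha0) hfb0
      have hζs : (f a / f b) ^ s = 1 := by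
        rw [div_pow, hfab, div_self (pow_ne_zero _ hfb0)]
      obtain ⟨ε, hεs, hεu⟩ := aux_uroot F hgcd hζ0 hζs
      have hab : f (ε * b) = f a := by
        show (ε * b) ^ u * h.eval ((ε * b) ^ s) = f a
        rw [mul_pow, mul_pow, hεs, one_mul, hεu]
        field_simp [hf]
        ring
      have : a = ε * b := (hbf.injective hab).symm
      rw [← has, ← hbs, this, mul_pow, hεs, one_mul]
    exact (Set.toFinite _).injOn_iff_bijOn_of_mapsTo hmapsTo |>.mp hinjOn
  · rintro ⟨hgcd, hbij⟩
    have hne : ∀ a : F, a ≠ 0 → f a ≠ 0 := by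
      intro a ha hfa
      have hmem' : (a ^ s) ∈ {x : F | x ^ d = 1} := hmem a ha
      have := hbij.mapsTo hmem'
      rw [← hpow, hfa, zero_pow hs0.ne'] at this
      simp only [Set.mem_setOf_eq, zero_pow hd0.ne'] at this
      exact zero_ne_one this
    have hinj : Function.Injective f := by
      intro a b hab
      rcases eq_or_ne a 0 with ha | ha
      · rcases eq_or_ne b 0 with hb | hb
        · rw [ha, hb]
        · exfalso; exact hne b hb (by rw [← hab, ha, hf0])
      · rcases eq_or_ne b 0 with hb | hb
        · exfalso; exact hne a ha (by rw [hab, hb, hf0])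
        · have hab' : g (a ^ s) = g (b ^ s) := by rw [← hpow, ← hpow, hab]
          have hss : a ^ s = b ^ s := hbij.injOn (hmem a ha) (hmem b hb) hab'
          have hh0 : h.eval (a ^ s) ≠ 0 := by
            intro h0
            apply hne a ha
            simp [hf, h0]
          have huu : a ^ u = b ^ u := by
            have : a ^ u * h.eval (a ^ s) = b ^ u * h.eval (a ^ s) := by
              conv_rhs => rw [hss]
              exact hab
            exact mul_right_cancel₀ hh0 this
          exact aux_eq F hgcd ha hb huu hss
    exact Finite.injective_iff_bijective.mp hinj
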